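/- Let H be a separable Hilbert space and let D be a dense linear subspace. If A is a linear operator in L†(D) (i.e., A maps D into D, dom(A*) ⊇ D, and A* maps D into D) and A is closed, then D = H and every element of L†(D) is a bounded operator on H. -/

import Mathlib

open scoped InnerProductSpace
open Filter Topology

section Aux
variable {H : Type*} [NormedAddCommGroup H] [InnerProductSpace ℂ H]

lemma graph_fst_mem (A : H →ₗ.[ℂ] H) (e : A.graph) : (e : H × H).1 ∈ A.domain := by
  obtain ⟨y, hy1, _⟩ := A.mem_graph_iff.mp e.2
  exact hy1 ▸ y.2

lemma graph_snd_eq (A : H →ₗ.[ℂ] H) (e : A.graph) :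
    A ⟨(e : H × H).1, graph_fst_mem A e⟩ = (e : H × H).2 := by
  obtain ⟨y, hy1, hy2⟩ := A.mem_graph_iff.mp e.2
  have : (⟨(e : H × H).1, graph_fst_mem A e⟩ : A.domain) = y := Subtype.ext hy1.symm
  rw [this, hy2]

lemma graph_ext (A : H →ₗ.[ℂ] H) (e f : A.graph) (h : (e : H × H).1 = (f : H × H).1) :
    e = f := by
  have h2 : (e : H × H).2 = (f : H × H).2 := by
    rw [← graph_snd_eq A e, ← graph_snd_eq A f]
    congr 1
    exact Subtype.ext h
  exact Subtype.ext (Prod.ext h h2)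

lemma quad1 {a n C : ℝ} (ha : 0 ≤ a) (hn : 0 ≤ n) (hC : 0 ≤ C)
    (h : a ^ 2 ≤ C * (n + a) * n) : a ≤ (C + 1) * n := by
  nlinarith [mul_nonneg ha hn, mul_nonneg hC (mul_nonneg hn hn),
    mul_nonneg (mul_nonneg hC hn) ha, sq_nonneg (a - (C + 1) * n), sq_nonneg n,
    mul_nonneg hC hn]

lemma quad2 {a n C : ℝ} (ha : 0 ≤ a) (hn : 0 ≤ n) (hC : 0 ≤ C)
    (h : a ^ 2 ≤ C * n ^ 2) : a ≤ (C + 1) * n := by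
  have hb : (0:ℝ) ≤ (C + 1) * n := mul_nonneg (by linarith) hn
  have h2 : a ^ 2 ≤ ((C + 1) * n) ^ 2 := by
    nlinarith [mul_nonneg (mul_nonneg hC hn) hn, sq_nonneg (C * n), sq_nonneg n]
  exact (pow_le_pow_iff_left₀ ha hb two_ne_zero).mp h2

/-- Every everywhere-defined operator with everywhere-defined adjoint is bounded. -/
lemma bounded_of_top [CompleteSpace H] (B : H →ₗ.[ℂ] H) (hBdom : B.domain = ⊤)
    (hBadjDom : B.adjoint.domain = ⊤) :
    ∃ C : ℝ, ∀ x : B.domain, ‖B x‖ ≤ C * ‖(x : H)‖ := by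
  have hBdense : Dense (B.domain : Set H) := by
    rw [hBdom]; simpa using dense_univ
  let ι : H →ₗ[ℂ] B.domain :=
    LinearMap.codRestrict B.domain LinearMap.id fun x => by rw [hBdom]; exact Submodule.mem_top
  let ι' : H →ₗ[ℂ] B.adjoint.domain :=
    LinearMap.codRestrict B.adjoint.domain LinearMap.id fun x => by
      rw [hBadjDom]; exact Submodule.mem_top
  let b : H →ₗ[ℂ] H := B.toFun.comp ι
  let b' : H →ₗ[ℂ] H := B.adjoint.toFun.comp ι'
  have hadj := B.adjoint_isFormalAdjoint hBdense
  have key : ∀ x y : H, ⟪b' x, y⟫_ℂ = ⟪x, b y⟫_ℂ := fun x y => hadj (ι' x) (ι y)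
  let S : H →ₗ[ℂ] H := b'.comp b
  have hS : S.IsSymmetric := by
    intro x y
    have h1 : ⟪S x, y⟫_ℂ = ⟪b x, b y⟫_ℂ := key (b x) y
    have h2 : ⟪x, S y⟫_ℂ = ⟪b x, b y⟫_ℂ := by
      have hk : ⟪S y, x⟫_ℂ = ⟪b y, b x⟫_ℂ := key (b y) x
      rw [← inner_conj_symm, hk, inner_conj_symm]
    rw [h1, h2]
  have hcont : Continuous S := hS.continuous
  let S' : H →L[ℂ] H := ⟨S, hcont⟩
  refine ⟨‖S'‖ + 1, fun x => ?_⟩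
  have hbx : B x = b (x : H) := rfl
  rw [hbx]
  have hsq : ‖b (x : H)‖ ^ 2 ≤ ‖S'‖ * ‖(x : H)‖ ^ 2 := by
    have e1 : ⟪S (x : H), (x : H)⟫_ℂ = ⟪b (x : H), b (x : H)⟫_ℂ := key (b (x : H)) (x : H)
    have e2 : ⟪b (x : H), b (x : H)⟫_ℂ = ((‖b (x : H)‖ : ℂ) ^ 2) := by
      rw [inner_self_eq_norm_sq_to_K]; norm_cast
    have e3 : ‖⟪S (x : H), (x : H)⟫_ℂ‖ ≤ ‖S (x : H)‖ * ‖(x : H)‖ := norm_inner_le_norm _ _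
    have e4 : ‖S (x : H)‖ ≤ ‖S'‖ * ‖(x : H)‖ := S'.le_opNorm (x : H)
    have e5 : ‖⟪S (x : H), (x : H)⟫_ℂ‖ = ‖b (x : H)‖ ^ 2 := by
      rw [e1, e2, norm_pow, Complex.norm_real, norm_norm]
    nlinarith [norm_nonneg ((x : H)), norm_nonneg (S (x : H))]
  exact quad2 (norm_nonneg _) (norm_nonneg _) (norm_nonneg S') hsq

end Aux

/-- If `D` is a dense subspace of a separable Hilbert space `H` and some
`A ∈ L†(D)` (i.e. `A` maps `D` to `D`, `D ⊆ dom A*` and `A*` maps `D` to `D`) is closed,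
then `D = H` and every element of `L†(D)` is a bounded operator. -/
theorem stmt0 {H : Type*} [NormedAddCommGroup H] [InnerProductSpace ℂ H] [CompleteSpace H]
    [TopologicalSpace.SeparableSpace H]
    (D : Submodule ℂ H) (hD : Dense (D : Set H))
    (A : H →ₗ.[ℂ] H) (hAdom : A.domain = D)
    (hAmap : ∀ x : A.domain, A x ∈ D)
    (hAadjDom : D ≤ A.adjoint.domain)
    (hAadjMap : ∀ x : A.adjoint.domain, (x : H) ∈ D → A.adjoint x ∈ D)
    (hclosed : A.IsClosed) :
    D = ⊤ ∧
      ∀ B : H →ₗ.[ℂ] H, B.domain = D → (∀ x : B.domain, B x ∈ D) →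
        D ≤ B.adjoint.domain → (∀ x : B.adjoint.domain, (x : H) ∈ D → B.adjoint x ∈ D) →
        ∃ C : ℝ, ∀ x : B.domain, ‖B x‖ ≤ C * ‖(x : H)‖ := by
  subst hAdom
  haveI : CompleteSpace A.graph := hclosed.completeSpace_coe
  have hadjA := A.adjoint_isFormalAdjoint hD
  -- the maps
  let p1 : A.graph →ₗ[ℂ] A.domain :=
    LinearMap.codRestrict A.domain ((LinearMap.fst ℂ H H).comp A.graph.subtype)
      fun e => graph_fst_mem A e
  let aD : A.domain →ₗ[ℂ] A.domain := LinearMap.codRestrict A.domain A.toFun hAmap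
  let adjD : A.domain →ₗ[ℂ] A.domain :=
    LinearMap.codRestrict A.domain (A.adjoint.toFun.comp (Submodule.inclusion hAadjDom))
      fun x => hAadjMap _ x.2
  let gmk : A.domain →ₗ[ℂ] A.graph :=
    LinearMap.codRestrict A.graph ((A.domain.subtype).prod A.toFun) fun x => A.mem_graph x
  let S : A.graph →ₗ[ℂ] A.graph := gmk.comp ((adjD.comp aD).comp p1)
  -- key inner-product identity
  have step : ∀ (e : A.graph) (w : A.domain),
      ⟪((S e : H × H)).1, (w : H)⟫_ℂ = ⟪(e : H × H).2, A w⟫_ℂ := by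
    intro e w
    have h1 : ⟪((S e : H × H)).1, (w : H)⟫_ℂ = ⟪(A (p1 e) : H), A w⟫_ℂ :=
      hadjA (Submodule.inclusion hAadjDom (aD (p1 e))) w
    rw [h1]
    congr 1
    exact graph_snd_eq A e
  -- continuity of S via the closed graph theorem
  have hScont : Continuous S := by
    apply S.continuous_of_seq_closed_graph
    intro u x y hux hSuy
    apply graph_ext A y (S x)
    refine hD.eq_of_inner_left ℂ fun w' hw => ?_
    let w : A.domain := ⟨w', hw⟩
    have hv : Tendsto (fun n => ((S (u n) : H × H))) atTop (𝓝 (y : H × H)) :=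
      (continuous_subtype_val.tendsto _).comp hSuy
    have hv1 : Tendsto (fun n => ((S (u n) : H × H)).1) atTop (𝓝 ((y : H × H)).1) :=
      (continuous_fst.tendsto _).comp hv
    have hu2 : Tendsto (fun n => ((u n : H × H)).2) atTop (𝓝 ((x : H × H)).2) :=
      (continuous_snd.tendsto _).comp ((continuous_subtype_val.tendsto _).comp hux)
    have t1 : Tendsto (fun n => ⟪((S (u n) : H × H)).1, (w : H)⟫_ℂ) atTop
        (𝓝 ⟪((y : H × H)).1, (w : H)⟫_ℂ) := hv1.inner tendsto_const_nhds
    have t2 : Tendsto (fun n => ⟪((S (u n) : H × H)).1, (w : H)⟫_ℂ) atTop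
        (𝓝 ⟪((x : H × H)).2, (A w : H)⟫_ℂ) :=
      (hu2.inner tendsto_const_nhds).congr fun n => (step (u n) w).symm
    exact (tendsto_nhds_unique t1 t2).trans (step x w).symm
  let S' : A.graph →L[ℂ] A.graph := ⟨S, hScont⟩
  have hbound : ∀ z : A.domain, ‖A z‖ ≤ (‖S'‖ + 1) * ‖(z : H)‖ := by
    intro z
    apply quad1 (norm_nonneg _) (norm_nonneg _) (norm_nonneg S')
    have e1 : ⟪((S (gmk z) : H × H)).1, (z : H)⟫_ℂ = ⟪(A z : H), (A z : H)⟫_ℂ := step (gmk z) z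
    have e2 : ‖⟪(A z : H), (A z : H)⟫_ℂ‖ = ‖A z‖ ^ 2 := by
      rw [inner_self_eq_norm_sq_to_K, norm_pow]
      simp
    have e3 : ‖⟪((S (gmk z) : H × H)).1, (z : H)⟫_ℂ‖ ≤ ‖((S (gmk z) : H × H)).1‖ * ‖(z : H)‖ :=
      norm_inner_le_norm _ _
    have e4 : ‖((S (gmk z) : H × H)).1‖ ≤ ‖S (gmk z)‖ := norm_fst_le _
    have e5 : ‖S (gmk z)‖ ≤ ‖S'‖ * ‖gmk z‖ := S'.le_opNorm _
    have e6 : ‖gmk z‖ ≤ ‖(z : H)‖ + ‖A z‖ := by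
      have h7 : ‖gmk z‖ = max ‖(z : H)‖ ‖A z‖ := by
        show ‖((gmk z : H × H))‖ = _
        rw [Prod.norm_def]
        rfl
      rw [h7]
      exact max_le (le_add_of_nonneg_right (norm_nonneg _))
        (le_add_of_nonneg_left (norm_nonneg _))
    have e7 : ‖A z‖ ^ 2 ≤ ‖S (gmk z)‖ * ‖(z : H)‖ := by
      rw [← e2, ← e1]
      exact e3.trans (mul_le_mul_of_nonneg_right e4 (norm_nonneg _))
    calc ‖A z‖ ^ 2 ≤ ‖S (gmk z)‖ * ‖(z : H)‖ := e7
      _ ≤ (‖S'‖ * (‖(z : H)‖ + ‖A z‖)) * ‖(z : H)‖ := by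
          apply mul_le_mul_of_nonneg_right _ (norm_nonneg _)
          exact e5.trans (mul_le_mul_of_nonneg_left e6 (norm_nonneg S'))
      _ = ‖S'‖ * (‖(z : H)‖ + ‖A z‖) * ‖(z : H)‖ := by ring
  have htop : A.domain = ⊤ := by
    rw [Submodule.eq_top_iff']
    intro x
    obtain ⟨u, hu_mem, hu_lim⟩ := mem_closure_iff_seq_limit.mp (hD x)
    have hCpos : (0:ℝ) < ‖S'‖ + 1 := by positivity
    have huc : CauchySeq u := hu_lim.cauchySeq
    have hvc : CauchySeq (fun n => (A ⟨u n, hu_mem n⟩ : H)) := by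
      rw [Metric.cauchySeq_iff] at huc ⊢
      intro ε hε
      obtain ⟨N, hN⟩ := huc (ε / (‖S'‖ + 1)) (by positivity)
      refine ⟨N, fun m hm n hn => ?_⟩
      have h1 := hN m hm n hn
      have h2 : dist (A ⟨u m, hu_mem m⟩ : H) (A ⟨u n, hu_mem n⟩)
          = ‖(A (⟨u m, hu_mem m⟩ - ⟨u n, hu_mem n⟩) : H)‖ := by
        rw [dist_eq_norm]
        congr 1
        exact (map_sub A.toFun _ _).symm
      have h3 := hbound (⟨u m, hu_mem m⟩ - ⟨u n, hu_mem n⟩)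
      have h4 : ((⟨u m, hu_mem m⟩ - ⟨u n, hu_mem n⟩ : A.domain) : H) = u m - u n := rfl
      rw [h2]
      rw [h4] at h3
      have h5 : ‖u m - u n‖ < ε / (‖S'‖ + 1) := by
        rwa [dist_eq_norm] at h1
      calc ‖(A (⟨u m, hu_mem m⟩ - ⟨u n, hu_mem n⟩) : H)‖ ≤ (‖S'‖ + 1) * ‖u m - u n‖ := h3
        _ < (‖S'‖ + 1) * (ε / (‖S'‖ + 1)) := by
            exact mul_lt_mul_of_pos_left h5 hCpos
        _ = ε := by field_simp
    have hqc : CauchySeq (fun n => ((u n, (A ⟨u n, hu_mem n⟩ : H)) : H × H)) := huc.prodMk hvc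
    obtain ⟨p, hp⟩ := cauchySeq_tendsto_of_complete hqc
    have hpg : p ∈ A.graph :=
      hclosed.mem_of_tendsto hp (Filter.Eventually.of_forall fun n =>
        show (u n, (A ⟨u n, hu_mem n⟩ : H)) ∈ (A.graph : Set (H × H)) from
          A.mem_graph ⟨u n, hu_mem n⟩)
    have hp1 : p.1 = x := tendsto_nhds_unique ((continuous_fst.tendsto p).comp hp) hu_lim
    exact hp1 ▸ graph_fst_mem A ⟨p, hpg⟩
  refine ⟨htop, fun B hBdom hBmap hBadjDom hBadjMap => ?_⟩
  exact bounded_of_top B (hBdom.trans htop) (top_unique (htop ▸ hBadjDom))
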